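/- Let 𝕆 denote the octonions and for an octonion a let l_a denote left multiplication by a. Let a₁, …, a_n be unitary purely imaginary octonions and g = l_{a₁} ∘ ⋯ ∘ l_{a_n}. If g(1) = 1, where 1 = (1,0) is the octonion unit, then the left-to-right product b = (…((a₁·a₂)·a₃)…)·a_n equals 1. -/

import Mathlib

noncomputable section

/-- The octonions, realized as pairs of quaternions. -/
abbrev Octonion := Quaternion ℝ × Quaternion ℝ

/-- Octonion multiplication: (α₁,α₂)·(β₁,β₂) = (α₁β₁ − β̄₂α₂, β₂α₁ + α₂β̄₁). -/
def omul (a b : Octonion) : Octonion :=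
  (a.1 * b.1 - star b.2 * a.2, b.2 * a.1 + a.2 * star b.1)

/-- Octonion conjugation: (α₁,α₂)* = (ᾱ₁, −α₂). -/
def oconj (a : Octonion) : Octonion := (star a.1, -a.2)

/-- The unit octonion 1 = (1,0). -/
def oone : Octonion := ((1 : Quaternion ℝ), (0 : Quaternion ℝ))

/-- An octonion is purely imaginary if a + a* = 0. -/
def IsPurelyImaginary (a : Octonion) : Prop := a + oconj a = 0

/-- The squared Euclidean norm ‖(α₁,α₂)‖² = ‖α₁‖² + ‖α₂‖². -/
def onormSq (a : Octonion) : ℝ := ‖a.1‖ ^ 2 + ‖a.2‖ ^ 2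

/-- The Euclidean norm of an octonion. -/
def onorm (a : Octonion) : ℝ := Real.sqrt (onormSq a)

/-- An octonion is unitary if its Euclidean norm equals 1. -/
def IsUnitary (a : Octonion) : Prop := onorm a = 1

/-- oconj is involutive. -/
lemma oconj_oconj (a : Octonion) : oconj (oconj a) = a := by
  simp [oconj]

lemma oconj_oone : oconj oone = oone := by
  simp [oconj, oone]

/-- Conjugation is an anti-homomorphism for octonion multiplication. -/
lemma oconj_omul (a b : Octonion) : oconj (omul a b) = omul (oconj b) (oconj a) := by
  obtain ⟨a1, a2⟩ := a
  obtain ⟨b1, b2⟩ := b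
  simp only [omul, oconj, Prod.mk.injEq]
  constructor <;> · simp only [star_sub, star_add, star_mul, star_star, star_neg]; noncomm_ring

/-- For a unitary octonion a, left multiplication by oconj a inverts left
multiplication by a. -/
lemma oconj_omul_omul (a : Octonion) (ha : IsUnitary a) (x : Octonion) :
    omul (oconj a) (omul a x) = x := by
  have h0 : (0:ℝ) ≤ onormSq a := by
    have := sq_nonneg ‖a.1‖
    have := sq_nonneg ‖a.2‖
    unfold onormSq; linarith
  have h1 : onormSq a = 1 := by
    have := Real.sq_sqrt h0
    rw [IsUnitary, onorm] at ha
    rw [← this, ha]; norm_num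
  have h2 : Quaternion.normSq a.1 + Quaternion.normSq a.2 = 1 := by
    simpa [onormSq, Quaternion.normSq_eq_norm_mul_self, sq] using h1
  obtain ⟨a1, a2⟩ := a
  obtain ⟨x1, x2⟩ := x
  simp only at h2
  simp only [omul, oconj, Prod.mk.injEq]
  have hc1 : star a1 * a1 = ((Quaternion.normSq a1 : ℝ) : Quaternion ℝ) :=
    Quaternion.star_mul_self a1
  have hc1' : a1 * star a1 = ((Quaternion.normSq a1 : ℝ) : Quaternion ℝ) :=
    Quaternion.self_mul_star a1
  have hc2 : star a2 * a2 = ((Quaternion.normSq a2 : ℝ) : Quaternion ℝ) :=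
    Quaternion.star_mul_self a2
  have hc2' : a2 * star a2 = ((Quaternion.normSq a2 : ℝ) : Quaternion ℝ) :=
    Quaternion.self_mul_star a2
  constructor
  · have : star a1 * (a1 * x1 - star x2 * a2) - star (x2 * a1 + a2 * star x1) * -a2
        = (star a1 * a1) * x1 + x1 * (star a2 * a2) := by
      simp only [star_add, star_mul, star_star]
      noncomm_ring
    rw [this, hc1, hc2, Quaternion.coe_mul_eq_smul, Quaternion.mul_coe_eq_smul,
      ← add_smul, h2, one_smul]
  · have : (x2 * a1 + a2 * star x1) * star a1 + -a2 * star (a1 * x1 - star x2 * a2)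
        = x2 * (a1 * star a1) + (a2 * star a2) * x2 := by
      simp only [star_sub, star_mul, star_star]
      noncomm_ring
    rw [this, hc1', hc2', Quaternion.mul_coe_eq_smul, Quaternion.coe_mul_eq_smul,
      ← add_smul, h2, one_smul]

lemma inv_foldr (l : List Octonion) (h : ∀ a ∈ l, IsUnitary a) (x : Octonion) :
    ((l.map oconj).reverse).foldr omul (l.foldr omul x) = x := by
  induction l with
  | nil => simp
  | cons a t ih =>
      simp only [List.map_cons, List.reverse_cons, List.foldr_append, List.foldr_cons,
        List.foldr_nil]
      rw [oconj_omul_omul a (h a List.mem_cons_self)]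
      exact ih (fun b hb => h b (List.mem_cons_of_mem a hb)) 

lemma oconj_foldl (l : List Octonion) (x : Octonion) :
    oconj (l.foldl omul x) = (l.reverse.map oconj).foldr omul (oconj x) := by
  induction l generalizing x with
  | nil => simp
  | cons a t ih =>
      simp only [List.foldl_cons, List.reverse_cons, List.map_append, List.map_cons,
        List.map_nil, List.foldr_append, List.foldr_cons, List.foldr_nil]
      rw [ih (omul x a), oconj_omul]

/-- If g = l_{a₁} ∘ ⋯ ∘ l_{a_n} with the aᵢ unitary purely imaginary octonions
and g(1) = 1, then the left-to-right product b = (…((a₁·a₂)·a₃)…)·a_n equals 1. -/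
theorem prod_eq_one_of_fix_one (l : List Octonion)
    (h : ∀ a ∈ l, IsUnitary a ∧ IsPurelyImaginary a)
    (hg : l.foldr omul oone = oone) :
    l.foldl omul oone = oone := by
  have key : ((l.map oconj).reverse).foldr omul oone = oone := by
    have := inv_foldr l (fun a ha => (h a ha).1) oone
    rwa [hg] at this
  have h2 : oconj (l.foldl omul oone) = oone := by
    rw [oconj_foldl, oconj_oone, ← List.map_reverse] at *
    exact key
  have := congrArg oconj h2
  rwa [oconj_oconj, oconj_oone] at this
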